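/- Let n be a positive integer, ζ_n a primitive n-th root of unity in ℂ, and k a positive integer. Then for every complex number X, Σ_{r=0}^{n-1} z̄_n({k}^r; ζ_n) · X^r = (1/n^k) · Π_{j=1}^{n-1} ( (1-ζ_n^j)^k + ζ_n^{(k-1)j} · X ), where z̄_n({k}^0; ζ_n) = 1 by convention. -/

import Mathlib

open Finset

/-- The set of tuples `(m_1,...,m_r)` with `n > m_1 > m_2 > ... > m_r > 0`. -/
def msets (n r : ℕ) : Finset (Fin r → Fin n) :=
  Finset.univ.filter fun m =>
    (∀ i j : Fin r, i < j → m j < m i) ∧ ∀ i, 0 < (m i : ℕ)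

/-- The set of tuples `(m_1,...,m_r)` with `n > m_1 ≥ m_2 ≥ ... ≥ m_r > 0`. -/
def msetsStar (n r : ℕ) : Finset (Fin r → Fin n) :=
  Finset.univ.filter fun m =>
    (∀ i j : Fin r, i ≤ j → m j ≤ m i) ∧ ∀ i, 0 < (m i : ℕ)

/-- The finite multiple harmonic q-series
`z_n(k_1,…,k_r; q) = Σ_{n > m_1 > … > m_r > 0} Π_i q^{(k_i-1)m_i}/[m_i]_q^{k_i}`,
where `[m]_q = (1-q^m)/(1-q)`. -/
noncomputable def z (n : ℕ) {r : ℕ} (k : Fin r → ℕ) (q : ℂ) : ℂ :=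
  ∑ m ∈ msets n r,
    ∏ i, q ^ ((k i - 1) * (m i : ℕ)) / ((1 - q ^ (m i : ℕ)) / (1 - q)) ^ (k i)

/-- The star version `z*_n(k; q)`, summed over `n > m_1 ≥ … ≥ m_r > 0`. -/
noncomputable def zstar (n : ℕ) {r : ℕ} (k : Fin r → ℕ) (q : ℂ) : ℂ :=
  ∑ m ∈ msetsStar n r,
    ∏ i, q ^ ((k i - 1) * (m i : ℕ)) / ((1 - q ^ (m i : ℕ)) / (1 - q)) ^ (k i)

/-- The modified value `z̄_n(k;q) = (1-q)^{-wt(k)} z_n(k;q)`. -/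
noncomputable def zbar (n : ℕ) {r : ℕ} (k : Fin r → ℕ) (q : ℂ) : ℂ :=
  (1 - q)⁻¹ ^ (∑ i, k i) * z n k q

/-- The modified star value `z̄*_n(k;q) = (1-q)^{-wt(k)} z*_n(k;q)`. -/
noncomputable def zstarbar (n : ℕ) {r : ℕ} (k : Fin r → ℕ) (q : ℂ) : ℂ :=
  (1 - q)⁻¹ ^ (∑ i, k i) * zstar n k q

/-- `I(k,r,s)`: the set of indices (tuples of positive integers) of weight `k`,
depth `r` and height `s`. -/
def indexSet3 (k r s : ℕ) : Finset (Fin r → ℕ) :=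
  (Finset.Nat.antidiagonalTuple r k).filter fun a =>
    (∀ i, 1 ≤ a i) ∧ (Finset.univ.filter fun i => 2 ≤ a i).card = s

/-- `I(k,r)`: the set of indices of weight `k` and depth `r`. -/
def indexSet2 (k r : ℕ) : Finset (Fin r → ℕ) :=
  (Finset.Nat.antidiagonalTuple r k).filter fun a => ∀ i, 1 ≤ a i

/-- The one-variable finite q-multiple polylogarithm
`L_{k_1,…,k_r}^{(n)}(t;q) = Σ_{n > m_1 > … > m_r > 0} t^{m_1} / Π_i (1-q^{m_i})^{k_i}`,
with `L_∅(t) = 1`. -/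
noncomputable def Lpoly (n : ℕ) {r : ℕ} (k : Fin r → ℕ) (q t : ℂ) : ℂ :=
  ∑ m ∈ msets n r,
    ∏ i : Fin r, (if i.val = 0 then t ^ (m i : ℕ) else 1) / (1 - q ^ (m i : ℕ)) ^ (k i)

/-- The star version `L*_{k_1,…,k_r}^{(n)}(t;q)`, summed over `n > m_1 ≥ … ≥ m_r > 0`. -/
noncomputable def LpolyStar (n : ℕ) {r : ℕ} (k : Fin r → ℕ) (q t : ℂ) : ℂ :=
  ∑ m ∈ msetsStar n r,
    ∏ i : Fin r, (if i.val = 0 then t ^ (m i : ℕ) else 1) / (1 - q ^ (m i : ℕ)) ^ (k i)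


open Polynomial in
lemma prod_one_sub_zeta (n : ℕ) (hn : 0 < n) (ζ : ℂ) (hζ : IsPrimitiveRoot ζ n) :
    ∏ j ∈ Finset.Ico 1 n, (1 - ζ ^ j) = (n : ℂ) := by
  have himg : (Finset.range n).image (ζ ^ ·) = Polynomial.nthRootsFinset n (1 : ℂ) := by
    apply Finset.eq_of_subset_of_card_le
    · intro x hx
      obtain ⟨j, hj, rfl⟩ := Finset.mem_image.mp hx
      rw [Polynomial.mem_nthRootsFinset hn, ← pow_mul, mul_comm, pow_mul, hζ.pow_eq_one, one_pow]
    · rw [hζ.card_nthRootsFinset, Finset.card_image_of_injOn hζ.injOn_pow, Finset.card_range]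
  have key : ∏ j ∈ Finset.range n, (X - C (ζ ^ j)) = X ^ n - 1 := by
    rw [X_pow_sub_one_eq_prod hn hζ, ← himg, Finset.prod_image]
    intro a ha b hb h
    exact hζ.injOn_pow (by simpa using ha) (by simpa using hb) h
  have key2 : (∏ j ∈ Finset.Ico 1 n, (X - C (ζ ^ j))) * (X - C (1:ℂ)) =
      (∑ i ∈ Finset.range n, (X : ℂ[X]) ^ i) * (X - C 1) := by
    rw [map_one, geom_sum_mul, ← key, Finset.range_eq_Ico,
      Finset.prod_eq_prod_Ico_succ_bot hn (fun j => X - C (ζ ^ j)), pow_zero]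
    rw [map_one]; ring
  have hX1 : (X - C (1:ℂ)) ≠ 0 := X_sub_C_ne_zero 1
  have key3 := mul_right_cancel₀ hX1 key2
  have := congrArg (Polynomial.eval 1) key3
  simpa [Polynomial.eval_prod] using this

lemma sum_msets (n r : ℕ) (f : ℕ → ℂ) :
    ∑ m ∈ msets n r, ∏ i, f (m i : ℕ) =
      ∑ s ∈ (Finset.Ico 1 n).powersetCard r, ∏ j ∈ s, f j := by
  classical
  have hmem : ∀ m : Fin r → Fin n, m ∈ msets n r ↔
      (∀ i j : Fin r, i < j → m j < m i) ∧ ∀ i, 0 < (m i : ℕ) := by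
    intro m; simp [msets]
  have hinj : ∀ m : Fin r → Fin n, (∀ i j : Fin r, i < j → m j < m i) →
      Function.Injective (fun i : Fin r => (m i : ℕ)) := by
    intro m hm i j hij
    rcases lt_trichotomy i j with h | h | h
    · exact absurd (Fin.val_injective hij) (hm i j h).ne'
    · exact h
    · exact absurd (Fin.val_injective hij) (hm j i h).ne
  have hsm : ∀ m : Fin r → Fin n, (∀ i j : Fin r, i < j → m j < m i) →
      StrictMono (fun i : Fin r => (m i.rev : ℕ)) := by
    intro m hm i j hij
    exact_mod_cast hm j.rev i.rev (by simpa using hij)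
  refine Finset.sum_bij (fun m _ => Finset.image (fun i : Fin r => (m i : ℕ)) Finset.univ)
    ?_ ?_ ?_ ?_
  · intro m hm
    obtain ⟨h1, h2⟩ := (hmem m).mp hm
    rw [Finset.mem_powersetCard]
    constructor
    · intro x hx
      obtain ⟨i, _, rfl⟩ := Finset.mem_image.mp hx
      exact Finset.mem_Ico.mpr ⟨h2 i, (m i).isLt⟩
    · rw [Finset.card_image_of_injective _ (hinj m h1), Finset.card_univ, Fintype.card_fin]
  · intro m₁ hm₁ m₂ hm₂ h
    have h' : Finset.image (fun i : Fin r => (m₁ i : ℕ)) Finset.univ =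
        Finset.image (fun i : Fin r => (m₂ i : ℕ)) Finset.univ := h
    obtain ⟨h11, h12⟩ := (hmem m₁).mp hm₁
    obtain ⟨h21, h22⟩ := (hmem m₂).mp hm₂
    set s := Finset.image (fun i : Fin r => (m₁ i : ℕ)) Finset.univ with hs
    have hcard : s.card = r := by
      rw [hs, Finset.card_image_of_injective _ (hinj m₁ h11), Finset.card_univ, Fintype.card_fin]
    have e1 : (fun i : Fin r => (m₁ i.rev : ℕ)) = s.orderEmbOfFin hcard :=
      Finset.orderEmbOfFin_unique hcard
        (fun i => Finset.mem_image.mpr ⟨i.rev, Finset.mem_univ _, rfl⟩) (hsm m₁ h11)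
    have e2 : (fun i : Fin r => (m₂ i.rev : ℕ)) = s.orderEmbOfFin hcard :=
      Finset.orderEmbOfFin_unique hcard
        (fun i => by rw [h']; exact Finset.mem_image.mpr ⟨i.rev, Finset.mem_univ _, rfl⟩)
        (hsm m₂ h21)
    funext i
    have := congrFun (e1.trans e2.symm) i.rev
    simp only [Fin.rev_rev] at this
    exact Fin.ext (by exact_mod_cast this)
  · intro s hs
    rw [Finset.mem_powersetCard] at hs
    obtain ⟨hsub, hcard⟩ := hs
    set e := s.orderEmbOfFin hcard with he
    have hmem' : ∀ i : Fin r, e i ∈ s := fun i => Finset.orderEmbOfFin_mem s hcard i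
    have hlt : ∀ i : Fin r, e i < n := fun i => (Finset.mem_Ico.mp (hsub (hmem' i))).2
    have hpos : ∀ i : Fin r, 1 ≤ e i := fun i => (Finset.mem_Ico.mp (hsub (hmem' i))).1
    refine ⟨fun i : Fin r => ⟨e i.rev, hlt _⟩, ?_, ?_⟩
    · rw [hmem]
      refine ⟨fun i j hij => ?_, fun i => hpos _⟩
      exact (Finset.orderEmbOfFin s hcard).strictMono (by simpa using hij)
    · apply Finset.eq_of_subset_of_card_le
      · intro x hx
        obtain ⟨i, _, rfl⟩ := Finset.mem_image.mp hx
        exact hmem' _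
      · rw [Finset.card_image_of_injective, Finset.card_univ, Fintype.card_fin, hcard]
        intro i j h
        simp only [Fin.mk.injEq] at h
        have := (Finset.orderEmbOfFin s hcard).injective h
        simpa using congrArg Fin.rev this
  · intro m hm
    obtain ⟨h1, _⟩ := (hmem m).mp hm
    rw [Finset.prod_image (fun i _ j _ h => hinj m h1 h)]

lemma zbar_eq (n r k : ℕ) (q : ℂ) (hq : q ≠ 1) :
    zbar n (fun _ : Fin r => k) q =
      ∑ m ∈ msets n r, ∏ i, q ^ ((k - 1) * (m i : ℕ)) / (1 - q ^ (m i : ℕ)) ^ k := by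
  have h1 : (1 : ℂ) - q ≠ 0 := sub_ne_zero.mpr (Ne.symm hq)
  unfold zbar z
  rw [Finset.mul_sum]
  refine Finset.sum_congr rfl fun m _ => ?_
  have hfac : ∀ i : Fin r, q ^ ((k - 1) * (m i : ℕ)) / ((1 - q ^ (m i : ℕ)) / (1 - q)) ^ k
      = (1 - q) ^ k * (q ^ ((k - 1) * (m i : ℕ)) / (1 - q ^ (m i : ℕ)) ^ k) := by
    intro i
    rw [div_pow, div_div_eq_mul_div, mul_comm, mul_div_assoc]
  simp_rw [hfac]
  rw [Finset.prod_mul_distrib, Finset.prod_const, Finset.card_univ, Fintype.card_fin,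
    Finset.sum_const, Finset.card_univ, Fintype.card_fin, smul_eq_mul, ← mul_assoc,
    ← pow_mul, mul_comm k r, inv_pow, inv_mul_cancel₀ (pow_ne_zero _ h1), one_mul]

/-- `Σ_{r=0}^{n-1} z̄_n({k}^r; ζ_n) X^r
  = (1/n^k)·Π_{j=1}^{n-1} ((1-ζ_n^j)^k + ζ_n^{(k-1)j} X)`. -/
theorem zbar_kkk_generating_function (n : ℕ) (hn : 0 < n) (ζ : ℂ)
    (hζ : IsPrimitiveRoot ζ n) (k : ℕ) (hk : 1 ≤ k) (X : ℂ) :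
    ∑ r ∈ Finset.range n, zbar n (fun _ : Fin r => k) ζ * X ^ r =
      (1 / (n : ℂ) ^ k) *
        ∏ j ∈ Finset.Ico 1 n, ((1 - ζ ^ j) ^ k + ζ ^ ((k - 1) * j) * X) := by
  rcases eq_or_lt_of_le (Nat.succ_le_of_lt hn) with h1 | h1
  · have hn1 : n = 1 := h1.symm
    subst hn1
    simp only [Finset.range_one, Finset.sum_singleton, Finset.Ico_self, Finset.prod_empty,
      pow_zero, mul_one, Nat.cast_one, one_pow, one_div, inv_one]
    rw [zbar, z]
    have : msets 1 0 = Finset.univ := by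
      ext m; simp [msets]
    simp [this]
  · have hq : ζ ≠ 1 := hζ.ne_one h1
    set a : ℕ → ℂ := fun j => ζ ^ ((k - 1) * j) / (1 - ζ ^ j) ^ k with ha
    have hzj : ∀ j ∈ Finset.Ico 1 n, (1 : ℂ) - ζ ^ j ≠ 0 := by
      intro j hj
      rw [Finset.mem_Ico] at hj
      exact sub_ne_zero.mpr (Ne.symm (hζ.pow_ne_one_of_pos_of_lt (Nat.one_le_iff_ne_zero.mp hj.1) hj.2))
    have step1 : ∑ r ∈ Finset.range n, zbar n (fun _ : Fin r => k) ζ * X ^ r =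
        ∑ s ∈ (Finset.Ico 1 n).powerset, ∏ j ∈ s, (a j * X) := by
      rw [Finset.sum_powerset]
      have hcard : (Finset.Ico 1 n).card + 1 = n := by
        rw [Nat.card_Ico]; omega
      rw [hcard]
      refine Finset.sum_congr rfl fun r _ => ?_
      rw [zbar_eq n r k ζ hq, sum_msets n r a, Finset.sum_mul]
      refine Finset.sum_congr rfl fun s hs => ?_
      rw [Finset.prod_mul_distrib, Finset.prod_const,
        (Finset.mem_powersetCard.mp hs).2]
    have step2 : ∏ j ∈ Finset.Ico 1 n, (a j * X + 1) =
        ∑ s ∈ (Finset.Ico 1 n).powerset, ∏ j ∈ s, (a j * X) := by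
      rw [Finset.prod_add]
      simp
    rw [step1, ← step2]
    have hprod := prod_one_sub_zeta n hn ζ hζ
    have hfac : ∀ j ∈ Finset.Ico 1 n, a j * X + 1 =
        ((1 - ζ ^ j) ^ k + ζ ^ ((k - 1) * j) * X) / (1 - ζ ^ j) ^ k := by
      intro j hj
      have h0 : ((1 : ℂ) - ζ ^ j) ^ k ≠ 0 := pow_ne_zero _ (hzj j hj)
      simp only [ha]
      field_simp
      ring
    rw [Finset.prod_congr rfl hfac, Finset.prod_div_distrib, Finset.prod_pow, hprod,
      div_eq_mul_inv, one_div, mul_comm]
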